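/- Let σ, ρ, β > 0 and let F be the Lorenz vector field. There exists R > 0 (depending only on σ, ρ, β) such that every forward solution of the Lorenz system remains bounded: if γ : [0, ∞) → ℝ³ is differentiable with γ'(t) = F(γ(t)) for all t ≥ 0, then V(γ(t)) ≤ max(V(γ(0)), R) for all t ≥ 0, where V(x, y, z) = x² + y² + (z − σ − ρ)². In particular, trajectories initialized in a sufficiently large ball centered at (0, 0, σ + ρ) remain in that ball forever. -/

import Mathlib

/-- The Lorenz vector field with parameters `σ, ρ, β`. -/
def lorenz (σ ρ β : ℝ) (p : ℝ × ℝ × ℝ) : ℝ × ℝ × ℝ :=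
  (σ * (p.2.1 - p.1), p.1 * (ρ - p.2.2) - p.2.1, p.1 * p.2.1 - β * p.2.2)

/-- The squared distance to the point `(0, 0, σ + ρ)`. -/
def lorenzV (σ ρ : ℝ) (p : ℝ × ℝ × ℝ) : ℝ :=
  p.1 ^ 2 + p.2.1 ^ 2 + (p.2.2 - σ - ρ) ^ 2

/-- Key algebraic inequality for the Lyapunov function derivative. -/
lemma lorenz_key (σ ρ β c : ℝ) (hσ : 0 < σ) (hβ : 0 < β)
    (hc1 : c ≤ 2 * σ) (hc2 : c ≤ 2) (hc3 : c ≤ β) (x y z : ℝ) :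
    2 * x * (σ * (y - x)) + 2 * y * (x * (ρ - z) - y) +
      2 * (z - σ - ρ) * (x * y - β * z) ≤
      -c * (x ^ 2 + y ^ 2 + (z - σ - ρ) ^ 2) + β * (σ + ρ) ^ 2 := by
  nlinarith [sq_nonneg x, sq_nonneg y, sq_nonneg (z - σ - ρ), sq_nonneg z,
    mul_nonneg hβ.le (sq_nonneg z), mul_nonneg (sub_nonneg.2 hc1) (sq_nonneg x),
    mul_nonneg (sub_nonneg.2 hc2) (sq_nonneg y),
    mul_nonneg (sub_nonneg.2 hc3) (sq_nonneg (z - σ - ρ))]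

/-- There exists `R > 0`, depending only on `σ, ρ, β`, such that every forward solution of
the Lorenz system remains bounded: `V(γ(t)) ≤ max (V(γ(0))) R` for all `t ≥ 0`, where `V`
is the squared distance to `(0, 0, σ + ρ)`. In particular trajectories initialized in a
sufficiently large ball centered at `(0, 0, σ + ρ)` remain in that ball forever. -/
theorem lorenz_forward_bounded (σ ρ β : ℝ) (hσ : 0 < σ) (hρ : 0 < ρ) (hβ : 0 < β) :
    ∃ R : ℝ, 0 < R ∧
      ∀ γ : ℝ → ℝ × ℝ × ℝ, (∀ t : ℝ, 0 ≤ t → HasDerivAt γ (lorenz σ ρ β (γ t)) t) →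
        ∀ t : ℝ, 0 ≤ t → lorenzV σ ρ (γ t) ≤ max (lorenzV σ ρ (γ 0)) R := by
  set c : ℝ := min (2 * σ) (min 2 β) with hcdef
  have hc0 : 0 < c := lt_min (by linarith) (lt_min two_pos hβ)
  set A : ℝ := β * (σ + ρ) ^ 2 with hAdef
  have hA0 : 0 < A := by positivity
  refine ⟨A / c, by positivity, ?_⟩
  intro γ hγ t ht
  set f : ℝ → ℝ := fun s => lorenzV σ ρ (γ s) with hfdef
  set f' : ℝ → ℝ := fun s =>
    2 * (γ s).1 * (lorenz σ ρ β (γ s)).1 + 2 * (γ s).2.1 * (lorenz σ ρ β (γ s)).2.1 +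
      2 * ((γ s).2.2 - σ - ρ) * (lorenz σ ρ β (γ s)).2.2 with hf'def
  have hd : ∀ s : ℝ, 0 ≤ s → HasDerivAt f (f' s) s := by
    intro s hs
    have hγs := hγ s hs
    have h1 : HasDerivAt (fun u => (γ u).1) (lorenz σ ρ β (γ s)).1 s :=
      (hasFDerivAt_fst (𝕜 := ℝ) (E := ℝ) (F := ℝ × ℝ)).comp_hasDerivAt s hγs
    have h2 : HasDerivAt (fun u => (γ u).2) (lorenz σ ρ β (γ s)).2 s :=
      (hasFDerivAt_snd (𝕜 := ℝ) (E := ℝ) (F := ℝ × ℝ)).comp_hasDerivAt s hγs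
    have h21 : HasDerivAt (fun u => (γ u).2.1) (lorenz σ ρ β (γ s)).2.1 s :=
      (hasFDerivAt_fst (𝕜 := ℝ) (E := ℝ) (F := ℝ)).comp_hasDerivAt s h2
    have h22 : HasDerivAt (fun u => (γ u).2.2) (lorenz σ ρ β (γ s)).2.2 s :=
      (hasFDerivAt_snd (𝕜 := ℝ) (E := ℝ) (F := ℝ)).comp_hasDerivAt s h2
    have := ((h1.pow 2).add (h21.pow 2)).add (((h22.sub_const σ).sub_const ρ).pow 2)
    refine HasDerivAt.congr_deriv this ?_
    simp only [hf'def]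
    ring
  have hbound : ∀ s ∈ Set.Ico (0 : ℝ) t, f' s ≤ (-c) * f s + A := by
    intro s hs
    have := lorenz_key σ ρ β c hσ hβ (min_le_left _ _)
      ((min_le_right _ _).trans (min_le_left _ _))
      ((min_le_right _ _).trans (min_le_right _ _)) (γ s).1 (γ s).2.1 (γ s).2.2
    simp only [hf'def, hfdef, lorenz, lorenzV]
    convert this using 1 <;> ring
  have hgron : f t ≤ gronwallBound (f 0) (-c) A (t - 0) := by
    apply le_gronwallBound_of_liminf_deriv_right_le
      (fun s hs => (hd s hs.1).continuousAt.continuousWithinAt)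
      (fun s hs r hr => ((hd s hs.1).hasDerivWithinAt.liminf_right_slope_le hr))
      le_rfl hbound
    exact Set.mem_Icc.2 ⟨ht, le_rfl⟩
  have hb : gronwallBound (f 0) (-c) A (t - 0) ≤ max (f 0) (A / c) := by
    rw [gronwallBound_of_K_ne_0 (neg_ne_zero.2 hc0.ne')]
    have he0 : 0 < Real.exp (-c * (t - 0)) := Real.exp_pos _
    have he1 : Real.exp (-c * (t - 0)) ≤ 1 := by
      apply Real.exp_le_one_iff.2
      nlinarith
    set e := Real.exp (-c * (t - 0)) with hedef
    show f 0 * e + A / (-c) * (e - 1) ≤ max (f 0) (A / c)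
    have h1 : f 0 ≤ max (f 0) (A / c) := le_max_left _ _
    have h2 : A / c ≤ max (f 0) (A / c) := le_max_right _ _
    have heq : f 0 * e + A / (-c) * (e - 1) = f 0 * e + (A / c) * (1 - e) := by
      rw [div_neg]; ring
    rw [heq]
    nlinarith [mul_le_mul_of_nonneg_right h1 he0.le,
      mul_le_mul_of_nonneg_right h2 (by linarith : (0:ℝ) ≤ 1 - e)]
  exact hgron.trans hb
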